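/- For n > k > 0: if k ≡ 2 (mod 4) then T(n,k,2) = L(n,k), and if k is odd or k ≡ 0 (mod 4) then T(n,k,1) = L(n,k), where L(n,k) = (1/n)·∑_{d | gcd(n,k)} μ(d)·C(n/d,k/d) is the number of aperiodic necklaces (binary Lyndon words) with k black beads and n−k white beads. -/

import Mathlib

/-- `T n k s` is the number of `k`-element subsets of `ℤ/nℤ` whose sum of elements
is `s` modulo `n`. -/
noncomputable def T (n k : ℕ) (s : ℤ) : ℕ :=
  Nat.card {Q : Finset (ZMod n) // Q.card = k ∧ (∑ a ∈ Q, a) = (s : ZMod n)}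

/-- `L n k` is the number of aperiodic necklaces (binary Lyndon words) with `k` black
beads and `n - k` white beads: `L(n,k) = (1/n) ∑_{d ∣ gcd(n,k)} μ(d) C(n/d, k/d)`. -/
noncomputable def L (n k : ℕ) : ℚ :=
  (1 / n) * ∑ d ∈ (Nat.gcd n k).divisors,
    (ArithmeticFunction.moebius d : ℤ) * (Nat.choose (n / d) (k / d) : ℚ)

open Finset Polynomial

namespace Stmt14Aux

variable (n : ℕ) [NeZero n]

noncomputable def zet (n : ℕ) : ℂ := Complex.exp (2 * Real.pi * Complex.I / n)

lemma zet_prim : IsPrimitiveRoot (zet n) n := Complex.isPrimitiveRoot_exp n (NeZero.ne n)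

noncomputable def psi : AddChar (ZMod n) ℂ := AddChar.zmodChar n (zet_prim n).pow_eq_one

lemma psi_eq_one_iff (a : ZMod n) : psi n a = 1 ↔ a = 0 := by
  constructor
  · intro h
    rw [psi, AddChar.zmodChar_apply, ← pow_zero (zet n)] at h
    exact (ZMod.val_eq_zero a).mp
      (IsPrimitiveRoot.pow_inj (zet_prim n) (ZMod.val_lt a) (NeZero.pos _) h)
  · rintro rfl; exact AddChar.map_zero_eq_one _

lemma psi_sum {n : ℕ} [NeZero n] {ι : Type*} (Q : Finset ι) (f : ι → ZMod n) :
    psi n (∑ a ∈ Q, f a) = ∏ a ∈ Q, psi n (f a) := by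
  classical
  induction Q using Finset.cons_induction with
  | empty => simp
  | cons a Q ha ih => rw [Finset.sum_cons, Finset.prod_cons, AddChar.map_add_eq_mul, ih]

lemma orth (x : ZMod n) :
    ∑ t : ZMod n, psi n (t * x) = if x = 0 then (n : ℂ) else 0 := by
  split_ifs with h
  · subst h; simp [ZMod.card]
  · have h1 : psi n x ≠ 1 := fun hc => h ((psi_eq_one_iff n x).mp hc)
    have key : (∑ t : ZMod n, psi n (t * x)) * psi n x = ∑ t : ZMod n, psi n (t * x) := by
      rw [Finset.sum_mul]
      have : ∀ t : ZMod n, psi n (t * x) * psi n x = psi n ((t + 1) * x) := by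
        intro t
        rw [add_mul, one_mul, AddChar.map_add_eq_mul]
      simp_rw [this]
      exact Fintype.sum_equiv (Equiv.addRight (1 : ZMod n)) _ _ (fun t => rfl)
    have h2 : (∑ t : ZMod n, psi n (t * x)) * (psi n x - 1) = 0 := by
      rw [mul_sub, key, mul_one, sub_self]
    rcases mul_eq_zero.mp h2 with h3 | h3
    · exact h3
    · exact absurd (sub_eq_zero.mp h3) h1

lemma geom_aux (e : ℕ) (he : 0 < e) (w : ℂ) (hw : w ^ e = 1) :
    ∑ j ∈ range e, w ^ j = if w = 1 then (e : ℂ) else 0 := by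
  split_ifs with h
  · subst h; simp
  · rw [geom_sum_eq h, hw, sub_self, zero_div]

/-- Evaluation of the sum of `psi (t * s)` over the subgroup `{t | addOrderOf t ∣ e}`. -/
lemma F_eval (s : ℤ) (e : ℕ) (he : e ∣ n) (he0 : 0 < e) :
    ∑ t ∈ univ.filter (fun t : ZMod n => addOrderOf t ∣ e), psi n (t * ((s : ℤ) : ZMod n))
      = if (e : ℤ) ∣ s then (e : ℂ) else 0 := by
  have hne : 0 < n / e := Nat.div_pos (Nat.le_of_dvd (NeZero.pos n) he) he0
  have hmul : n / e * e = n := Nat.div_mul_cancel he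
  set x : ZMod n := ((s : ℤ) : ZMod n) with hx
  set w : ℂ := psi n (((n / e : ℕ) : ZMod n) * x) with hwdef
  have hsum : ∑ t ∈ univ.filter (fun t : ZMod n => addOrderOf t ∣ e), psi n (t * x)
      = ∑ j ∈ range e, w ^ j := by
    refine Finset.sum_bij' (fun t _ => t.val / (n / e)) (fun j _ => ((n / e * j : ℕ) : ZMod n))
      ?_ ?_ ?_ ?_ ?_
    · -- membership: t ↦ j
      intro t ht
      rw [mem_filter] at ht
      have h0 : (e : ℕ) • t = 0 := (addOrderOf_dvd_iff_nsmul_eq_zero).mp ht.2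
      have h0' := h0
      rw [nsmul_eq_mul] at h0'
      have h1 : ((e * t.val : ℕ) : ZMod n) = 0 := by
        rw [Nat.cast_mul, ZMod.natCast_val, ZMod.cast_id]
        exact h0'
      have h2 : n ∣ e * t.val := (ZMod.natCast_eq_zero_iff _ _).mp h1
      have hmul' : e * (n / e) = n := by rw [mul_comm]; exact hmul
      have h3 : n / e ∣ t.val := by
        rcases h2 with ⟨c, hc⟩
        refine ⟨c, Nat.eq_of_mul_eq_mul_left he0 ?_⟩
        rw [hc]
        conv_lhs => rw [← hmul']
        rw [mul_assoc]
      rw [mem_range]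
      rw [Nat.div_lt_iff_lt_mul hne]
      calc t.val < n := ZMod.val_lt t
        _ = e * (n / e) := by rw [mul_comm]; exact hmul.symm
    · -- membership: j ↦ t
      intro j hj
      rw [mem_range] at hj
      rw [mem_filter]
      refine ⟨mem_univ _, ?_⟩
      rw [addOrderOf_dvd_iff_nsmul_eq_zero]
      have : (e : ℕ) • ((n / e * j : ℕ) : ZMod n) = ((n * j : ℕ) : ZMod n) := by
        rw [nsmul_eq_mul]
        push_cast
        rw [← mul_assoc]
        norm_cast
        rw [mul_comm (e:ℕ) (n/e), hmul]
      rw [this]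
      push_cast
      simp [ZMod.natCast_self]
    · -- left inverse
      intro t ht
      rw [mem_filter] at ht
      have h0 : (e : ℕ) • t = 0 := (addOrderOf_dvd_iff_nsmul_eq_zero).mp ht.2
      have h0' := h0
      rw [nsmul_eq_mul] at h0'
      have h1 : ((e * t.val : ℕ) : ZMod n) = 0 := by
        rw [Nat.cast_mul, ZMod.natCast_val, ZMod.cast_id]
        exact h0'
      have h2 : n ∣ e * t.val := (ZMod.natCast_eq_zero_iff _ _).mp h1
      have hmul' : e * (n / e) = n := by rw [mul_comm]; exact hmul
      have h3 : n / e ∣ t.val := by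
        rcases h2 with ⟨c, hc⟩
        refine ⟨c, Nat.eq_of_mul_eq_mul_left he0 ?_⟩
        rw [hc]
        conv_lhs => rw [← hmul']
        rw [mul_assoc]
      simp only [Nat.mul_div_cancel' h3, ZMod.natCast_zmod_val]
    · -- right inverse
      intro j hj
      rw [mem_range] at hj
      have hlt : n / e * j < n := by
        calc n / e * j < n / e * e := by exact (Nat.mul_lt_mul_left hne).mpr hj
          _ = n := hmul
      simp only [ZMod.val_cast_of_lt hlt, Nat.mul_div_cancel_left _ hne]
    · -- values
      intro t ht
      rw [mem_filter] at ht
      have h0 : (e : ℕ) • t = 0 := (addOrderOf_dvd_iff_nsmul_eq_zero).mp ht.2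
      have h0' := h0
      rw [nsmul_eq_mul] at h0'
      have h1 : ((e * t.val : ℕ) : ZMod n) = 0 := by
        rw [Nat.cast_mul, ZMod.natCast_val, ZMod.cast_id]
        exact h0'
      have h2 : n ∣ e * t.val := (ZMod.natCast_eq_zero_iff _ _).mp h1
      have hmul' : e * (n / e) = n := by rw [mul_comm]; exact hmul
      have h3 : n / e ∣ t.val := by
        rcases h2 with ⟨c, hc⟩
        refine ⟨c, Nat.eq_of_mul_eq_mul_left he0 ?_⟩
        rw [hc]
        conv_lhs => rw [← hmul']
        rw [mul_assoc]
      rw [hwdef, ← AddChar.map_nsmul_eq_pow]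
      congr 1
      rw [nsmul_eq_mul, ← mul_assoc]
      norm_cast
      rw [Nat.div_mul_cancel h3, ZMod.natCast_zmod_val]
  rw [hsum, geom_aux e he0 w ?_]
  · have hcond : (w = 1) ↔ ((e:ℤ) ∣ s) := by
      rw [hwdef, psi_eq_one_iff]
      have : ((n / e : ℕ) : ZMod n) * x = (((n / e : ℕ) * s : ℤ) : ZMod n) := by
        rw [hx, Int.cast_mul, Int.cast_natCast]
      rw [this, ZMod.intCast_zmod_eq_zero_iff_dvd]
      constructor
      · intro hd
        have hn' : (n : ℤ) = (n / e : ℕ) * e := by exact_mod_cast hmul.symm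
        rw [hn'] at hd
        exact (mul_dvd_mul_iff_left (by exact_mod_cast hne.ne' : ((n / e : ℕ) : ℤ) ≠ 0)).mp hd
      · intro hd
        have hn' : (n : ℤ) = (n / e : ℕ) * e := by exact_mod_cast hmul.symm
        rw [hn']
        exact mul_dvd_mul_left _ hd
    split_ifs with h1 h2 h2
    · rfl
    · exact absurd (hcond.mp h1) h2
    · exact absurd (hcond.mpr h2) h1
    · rfl
  · rw [hwdef, ← AddChar.map_nsmul_eq_pow]
    have : (e : ℕ) • (((n / e : ℕ) : ZMod n) * x) = 0 := by
      rw [nsmul_eq_mul, ← mul_assoc]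
      norm_cast
      rw [mul_comm (e:ℕ) (n/e), hmul]
      simp [ZMod.natCast_self]
    rw [this, AddChar.map_zero_eq_one]

noncomputable def fsum (s : ℤ) (d : ℕ) : ℂ :=
  ∑ t ∈ univ.filter (fun t : ZMod n => addOrderOf t = d), psi n (t * ((s : ℤ) : ZMod n))

lemma fsum_divisor_sum (s : ℤ) (e : ℕ) (he : 0 < e) :
    ∑ d ∈ e.divisors, fsum n s d
      = ∑ t ∈ univ.filter (fun t : ZMod n => addOrderOf t ∣ e), psi n (t * ((s : ℤ) : ZMod n)) := by
  rw [← Finset.sum_fiberwise_of_maps_to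
    (g := fun t : ZMod n => addOrderOf t) (t := e.divisors)
    (fun t ht => Nat.mem_divisors.mpr ⟨(Finset.mem_filter.mp ht).2, he.ne'⟩)]
  refine Finset.sum_congr rfl fun d hd => ?_
  rw [fsum]
  congr 1
  ext t
  simp only [Finset.mem_filter, Finset.mem_univ, true_and]
  constructor
  · rintro rfl
    exact ⟨(Nat.mem_divisors.mp hd).1, rfl⟩
  · rintro ⟨-, h⟩
    exact h
  
lemma fsum_eq (s : ℤ) (d : ℕ) (hd : 0 < d) (hdn : d ∣ n) :
    fsum n s d = ∑ i ∈ d.divisors,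
      (ArithmeticFunction.moebius (d / i) : ℤ) • (if (i : ℤ) ∣ s then (i : ℂ) else 0) := by
  have inv := (ArithmeticFunction.sum_eq_iff_sum_smul_moebius_eq
      (f := fun d => fsum n s d)
      (g := fun e => ∑ t ∈ univ.filter (fun t : ZMod n => addOrderOf t ∣ e),
        psi n (t * ((s : ℤ) : ZMod n)))).mp
    (fun e he => fsum_divisor_sum n s e he) d hd
  rw [← inv]
  rw [← Nat.sum_divisorsAntidiagonal' (f := fun a b =>
    (ArithmeticFunction.moebius a : ℤ) • (if (b : ℤ) ∣ s then (b : ℂ) else 0))]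
  refine Finset.sum_congr rfl fun p hp => ?_
  congr 1
  have hmem := Nat.mem_divisorsAntidiagonal.mp hp
  have hb : p.2 ∣ n := dvd_trans (Dvd.intro_left p.1 hmem.1) hdn
  have hb0 : 0 < p.2 := by
    rcases Nat.eq_zero_or_pos p.2 with h0 | h0
    · exfalso
      obtain ⟨h1, h2⟩ := hmem
      rw [h0, mul_zero] at h1
      omega
    · exact h0
  exact (F_eval n s p.2 hb hb0)

lemma fsum_eq_mu (d : ℕ) (hd : 0 < d) (hdn : d ∣ n) :
    fsum n (-1) d = (ArithmeticFunction.moebius d : ℤ) := by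
  rw [fsum_eq n (-1) d hd hdn]
  rw [Finset.sum_eq_single 1]
  · norm_num
  · intro i hi hne
    have hnd : ¬ ((i:ℤ) ∣ -1) := by
      intro hdvd
      have h3 : i ∣ 1 := by exact_mod_cast dvd_neg.mp hdvd
      exact hne (Nat.dvd_one.mp h3)
    simp [hnd]
  · intro h
    exact absurd (Nat.one_mem_divisors.mpr hd.ne') h

lemma fsum_eq_mu2 (d : ℕ) (hd : 0 < d) (hdn : d ∣ n) :
    fsum n (-2) d = (ArithmeticFunction.moebius d : ℤ)
      + (if 2 ∣ d then 2 * (ArithmeticFunction.moebius (d / 2) : ℤ) else 0) := by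
  rw [fsum_eq n (-2) d hd hdn]
  have hsplit : ∀ i ∈ d.divisors,
      (ArithmeticFunction.moebius (d / i) : ℤ) • (if (i : ℤ) ∣ (-2 : ℤ) then (i : ℂ) else 0)
        = (if i = 1 then ((ArithmeticFunction.moebius d : ℤ) : ℂ) else 0)
          + (if i = 2 then 2 * ((ArithmeticFunction.moebius (d / 2) : ℤ) : ℂ) else 0) := by
    intro i hi
    by_cases h1 : i = 1
    · subst h1; norm_num
    by_cases h2 : i = 2
    · subst h2
      norm_num
      ring
    · have hnd : ¬ ((i : ℤ) ∣ -2) := by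
        intro hdvd
        have h3 : i ∣ 2 := by exact_mod_cast dvd_neg.mp hdvd
        rcases (Nat.dvd_prime Nat.prime_two).mp h3 with h | h
        · exact h1 h
        · exact h2 h
      simp [h1, h2, hnd]
  rw [Finset.sum_congr rfl hsplit, Finset.sum_add_distrib,
    Finset.sum_ite_eq' d.divisors 1 (fun _ => ((ArithmeticFunction.moebius d : ℤ) : ℂ)),
    Finset.sum_ite_eq' d.divisors 2
      (fun _ => 2 * ((ArithmeticFunction.moebius (d / 2) : ℤ) : ℂ)),
    if_pos (Nat.one_mem_divisors.mpr hd.ne')]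
  by_cases h2 : 2 ∣ d
  · rw [if_pos (Nat.mem_divisors.mpr ⟨h2, hd.ne'⟩), if_pos h2]
    push_cast
    ring
  · rw [if_neg (fun h => h2 (Nat.mem_divisors.mp h).1), if_neg h2]
    norm_num

/-- For a primitive `e`-th root of unity, `∏_{i<e} (X - C (w^i)) = X^e - 1`. -/
lemma prod_X_sub_C_pow {e : ℕ} (he : 0 < e) {w : ℂ} (hw : IsPrimitiveRoot w e) :
    ∏ i ∈ range e, (X - C (w ^ i)) = X ^ e - 1 := by
  haveI : NeZero e := ⟨he.ne'⟩
  have himg : Polynomial.nthRootsFinset e (1 : ℂ) = (range e).image (w ^ ·) := by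
    ext x
    rw [Polynomial.mem_nthRootsFinset he 1, Finset.mem_image]
    constructor
    · intro hx
      obtain ⟨i, hi, hix⟩ := hw.eq_pow_of_pow_eq_one hx
      exact ⟨i, Finset.mem_range.mpr hi, hix⟩
    · rintro ⟨i, hi, rfl⟩
      rw [← pow_mul, mul_comm, pow_mul, hw.pow_eq_one, one_pow]
  rw [Polynomial.X_pow_sub_one_eq_prod he hw, himg,
    Finset.prod_image]
  intro i hi j hj hij
  exact hw.pow_inj (Finset.mem_range.mp hi) (Finset.mem_range.mp hj) hij

/-- `∏_{i<e} (X + C (w^i)) = X^e + C ((-1)^(e+1))`. -/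
lemma prod_X_add_C_pow {e : ℕ} (he : 0 < e) {w : ℂ} (hw : IsPrimitiveRoot w e) :
    ∏ i ∈ range e, (X + C (w ^ i)) = X ^ e + C ((-1 : ℂ) ^ (e + 1)) := by
  have hcomp := congrArg (fun p : ℂ[X] => p.comp (-X)) (prod_X_sub_C_pow he hw)
  simp only [Polynomial.prod_comp, Polynomial.sub_comp, Polynomial.X_comp, Polynomial.C_comp,
    Polynomial.pow_comp, Polynomial.one_comp, Finset.card_range] at hcomp
  have h1 : ∀ i : ℕ, -X - C (w ^ i) = -1 * (X + C (w ^ i)) := by intro i; ring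
  simp_rw [h1, Finset.prod_mul_distrib, Finset.prod_const, Finset.card_range] at hcomp
  have h2 : ((-1 : ℂ[X]) ^ e) * ((-1 : ℂ[X]) ^ e) = 1 := by
    rw [← mul_pow]; norm_num
  calc ∏ i ∈ range e, (X + C (w ^ i))
      = ((-1 : ℂ[X]) ^ e) * (((-1 : ℂ[X]) ^ e) * ∏ i ∈ range e, (X + C (w ^ i))) := by
        rw [← mul_assoc, h2, one_mul]
    _ = ((-1 : ℂ[X]) ^ e) * ((-X) ^ e - 1) := by rw [hcomp]
    _ = X ^ e + C ((-1 : ℂ) ^ (e + 1)) := by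
        rw [neg_pow (X : ℂ[X]) e, mul_sub, ← mul_assoc, h2, one_mul, mul_one, map_pow, map_neg, map_one]
        ring

/-- periodicity: `∏_{i < e*m} (X + C (w^i)) = (∏_{i<e} (X + C (w^i)))^m` when `w^e = 1`. -/
lemma prod_periodic {e : ℕ} {w : ℂ} (hw : w ^ e = 1) (m : ℕ) :
    ∏ i ∈ range (e * m), (X + C (w ^ i)) = (∏ i ∈ range e, (X + C (w ^ i))) ^ m := by
  induction m with
  | zero => simp
  | succ m ih =>
    have : e * (m + 1) = e * m + e := by ring
    rw [this, Finset.prod_range_add, ih, pow_succ]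
    congr 1
    refine Finset.prod_congr rfl fun i _ => ?_
    congr 2
    rw [pow_add, pow_mul, hw, one_pow]
    ring

/-- coefficient of `(X^e + C c)^m` -/
lemma coeff_pow_eval (e m q : ℕ) (he : 0 < e) (c : ℂ) (hq : q ≤ e * m) :
    ((X ^ e + C c) ^ m).coeff q
      = if e ∣ q then (Nat.choose m (q / e) : ℂ) * c ^ (m - q / e) else 0 := by
  rw [add_pow]
  rw [Polynomial.finset_sum_coeff]
  have hterm : ∀ j ∈ range (m + 1),
      ((X ^ e) ^ j * C c ^ (m - j) * (Nat.choose m j : ℂ[X])).coeff q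
        = if q = e * j then (Nat.choose m j : ℂ) * c ^ (m - j) else 0 := by
    intro j hj
    rw [← pow_mul, ← Polynomial.C_pow, ← Polynomial.C_eq_natCast, mul_assoc, ← Polynomial.C_mul,
      mul_comm (X ^ (e * j)), Polynomial.coeff_C_mul, Polynomial.coeff_X_pow]
    split_ifs with h
    · ring
    · ring
  rw [Finset.sum_congr rfl hterm]
  split_ifs with hdvd
  · rw [Finset.sum_eq_single (q / e)]
    · rw [if_pos (by rw [Nat.mul_div_cancel' hdvd])]
    · intro j hj hne
      rw [if_neg]
      intro hqe
      exact hne (by rw [hqe, Nat.mul_div_cancel_left _ he])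
    · intro habs
      exfalso
      apply habs
      rw [Finset.mem_range, Nat.lt_succ_iff]
      have h5 : q / e ≤ (e * m) / e := Nat.div_le_div_right hq
      rwa [Nat.mul_div_cancel_left m he] at h5
  · refine Finset.sum_eq_zero fun j hj => ?_
    rw [if_neg]
    intro hqe
    exact hdvd ⟨j, hqe⟩

lemma psi_pow (t : ZMod n) (i : ℕ) : psi n (t * (i : ℕ)) = (psi n t) ^ i := by
  rw [mul_comm, ← nsmul_eq_mul, AddChar.map_nsmul_eq_pow]

lemma prim_w (t : ZMod n) : IsPrimitiveRoot (psi n t) (addOrderOf t) := by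
  constructor
  · rw [← AddChar.map_nsmul_eq_pow, addOrderOf_nsmul_eq_zero, AddChar.map_zero_eq_one]
  · intro l hl
    rw [← AddChar.map_nsmul_eq_pow, psi_eq_one_iff] at hl
    exact addOrderOf_dvd_iff_nsmul_eq_zero.mpr hl

lemma prod_univ_reindex (g : ZMod n → ℂ[X]) :
    ∏ a : ZMod n, g a = ∏ i ∈ range n, g ((i : ℕ) : ZMod n) := by
  refine (Finset.prod_bij' (fun i _ => ((i : ℕ) : ZMod n)) (fun a _ => a.val)
    (fun i _ => mem_univ _) (fun a _ => mem_range.mpr (ZMod.val_lt a))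
    ?_ ?_ ?_).symm
  · intro i hi
    simp only [ZMod.val_cast_of_lt (mem_range.mp hi)]
  · intro a _
    simp only [ZMod.natCast_zmod_val]
  · intro i _
    rfl

lemma S_eval (k : ℕ) (hkn : k ≤ n) (t : ZMod n) :
    ∑ Q ∈ powersetCard k (univ : Finset (ZMod n)), ∏ a ∈ Q, psi n (t * a)
      = if addOrderOf t ∣ k then
          ((-1 : ℂ) ^ (addOrderOf t + 1)) ^ (k / addOrderOf t)
            * (Nat.choose (n / addOrderOf t) (k / addOrderOf t) : ℂ)
        else 0 := by
  set e := addOrderOf t with hedef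
  have he : 0 < e := addOrderOf_pos t
  have hedvd : e ∣ n := by
    have := addOrderOf_dvd_card (x := t)
    rwa [ZMod.card] at this
  have hcards : #(univ : Finset (ZMod n)) = n := by rw [card_univ, ZMod.card]
  have hstep1 : ∑ Q ∈ powersetCard k (univ : Finset (ZMod n)), ∏ a ∈ Q, psi n (t * a)
      = (∏ a : ZMod n, (X + C (psi n (t * a)))).coeff (n - k) := by
    rw [Finset.prod_X_add_C_coeff univ (fun a => psi n (t * a))
      (by rw [hcards]; exact Nat.sub_le n k)]
    rw [hcards, Nat.sub_sub_self hkn]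
  rw [hstep1, prod_univ_reindex]
  have hre : ∀ i ∈ range n, (X + C (psi n (t * ((i : ℕ) : ZMod n))))
      = (X + C ((psi n t) ^ i)) := by
    intro i _
    rw [psi_pow]
  rw [Finset.prod_congr rfl hre]
  have hn' : n = e * (n / e) := (Nat.mul_div_cancel' hedvd).symm
  rw [show range n = range (e * (n / e)) by rw [← hn']]
  rw [prod_periodic (prim_w n t).pow_eq_one, prod_X_add_C_pow he (prim_w n t)]
  rw [coeff_pow_eval e (n / e) (n - k) he _ (by rw [← hn']; exact Nat.sub_le n k)]
  have hiff : e ∣ n - k ↔ e ∣ k := by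
    constructor
    · intro h
      have := Nat.dvd_sub hedvd h
      rwa [Nat.sub_sub_self hkn] at this
    · intro h
      exact Nat.dvd_sub hedvd h
  by_cases hdvd : e ∣ k
  · rw [if_pos (hiff.mpr hdvd), if_pos hdvd]
    obtain ⟨A, hA⟩ := hedvd
    obtain ⟨B, hB⟩ := hdvd
    have hAe : n / e = A := by rw [hA, Nat.mul_div_cancel_left _ he]
    have hBe : k / e = B := by rw [hB, Nat.mul_div_cancel_left _ he]
    have hBA : B ≤ A := by
      by_contra hc
      push_neg at hc
      have : n < k := by
        rw [hA, hB]
        exact (Nat.mul_lt_mul_left he).mpr hc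
      omega
    have hsub : (n - k) / e = A - B := by
      rw [hA, hB, ← Nat.mul_sub, Nat.mul_div_cancel_left _ he]
    rw [hsub, hAe, hBe, Nat.choose_symm hBA, Nat.sub_sub_self hBA]
    ring
  · rw [if_neg (fun h => hdvd (hiff.mp h)), if_neg hdvd]

lemma master (k : ℕ) (hkn : k ≤ n) (s : ℤ) :
    (n : ℂ) * (T n k s : ℂ)
      = ∑ d ∈ (Nat.gcd n k).divisors,
          ((-1 : ℂ) ^ (d + 1)) ^ (k / d) * (Nat.choose (n / d) (k / d) : ℂ) * fsum n (-s) d := by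
  classical
  have hT : (T n k s : ℂ) = ∑ Q ∈ powersetCard k (univ : Finset (ZMod n)),
      if (∑ a ∈ Q, a) = ((s : ℤ) : ZMod n) then (1 : ℂ) else 0 := by
    rw [T, Nat.card_eq_fintype_card, Fintype.card_subtype]
    have hfeq : univ.filter (fun Q : Finset (ZMod n) =>
          Q.card = k ∧ (∑ a ∈ Q, a) = ((s : ℤ) : ZMod n))
        = (powersetCard k (univ : Finset (ZMod n))).filter
            (fun Q => (∑ a ∈ Q, a) = ((s : ℤ) : ZMod n)) := by
      ext Q
      simp [Finset.mem_powersetCard_univ]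
    rw [hfeq, Finset.card_filter]
    push_cast
    rfl
  have step2 : (n : ℂ) * (T n k s : ℂ) = ∑ Q ∈ powersetCard k (univ : Finset (ZMod n)),
      ∑ t : ZMod n, psi n (t * ((∑ a ∈ Q, a) - ((s : ℤ) : ZMod n))) := by
    rw [hT, Finset.mul_sum]
    refine Finset.sum_congr rfl fun Q _ => ?_
    rw [orth n ((∑ a ∈ Q, a) - ((s : ℤ) : ZMod n))]
    by_cases h : (∑ a ∈ Q, a) = ((s : ℤ) : ZMod n)
    · rw [if_pos h, if_pos (by rw [h, sub_self]), mul_one]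
    · rw [if_neg h, if_neg (fun hc => h (sub_eq_zero.mp hc)), mul_zero]
  rw [step2, Finset.sum_comm]
  have step3 : ∀ t : ZMod n,
      ∑ Q ∈ powersetCard k (univ : Finset (ZMod n)),
        psi n (t * ((∑ a ∈ Q, a) - ((s : ℤ) : ZMod n)))
      = psi n (t * (((-s : ℤ)) : ZMod n)) *
          (if addOrderOf t ∣ k then
          ((-1 : ℂ) ^ (addOrderOf t + 1)) ^ (k / addOrderOf t)
            * (Nat.choose (n / addOrderOf t) (k / addOrderOf t) : ℂ)
        else 0) := by
    intro t
    rw [← S_eval n k hkn t, Finset.mul_sum]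
    refine Finset.sum_congr rfl fun Q _ => ?_
    have h1 : t * ((∑ a ∈ Q, a) - ((s : ℤ) : ZMod n))
        = t * (((-s : ℤ)) : ZMod n) + ∑ a ∈ Q, t * a := by
      rw [← Finset.mul_sum]
      push_cast
      ring
    rw [h1, AddChar.map_add_eq_mul, psi_sum]
  simp_rw [step3]
  have step4 : ∑ t : ZMod n, psi n (t * (((-s : ℤ)) : ZMod n)) *
      (if addOrderOf t ∣ k then
          ((-1 : ℂ) ^ (addOrderOf t + 1)) ^ (k / addOrderOf t)
            * (Nat.choose (n / addOrderOf t) (k / addOrderOf t) : ℂ)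
        else 0)
      = ∑ d ∈ n.divisors, (if d ∣ k then
          ((-1 : ℂ) ^ (d + 1)) ^ (k / d) * (Nat.choose (n / d) (k / d) : ℂ) else 0)
          * fsum n (-s) d := by
    rw [← Finset.sum_fiberwise_of_maps_to (g := fun t : ZMod n => addOrderOf t)
      (t := n.divisors) (fun t _ => Nat.mem_divisors.mpr
        ⟨by have := addOrderOf_dvd_card (x := t); rwa [ZMod.card] at this, NeZero.ne n⟩)]
    refine Finset.sum_congr rfl fun d hd => ?_
    rw [fsum, Finset.mul_sum]
    refine Finset.sum_congr rfl fun t ht => ?_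
    rw [Finset.mem_filter] at ht
    rw [ht.2]
    ring
  rw [step4]
  simp_rw [ite_mul, zero_mul]
  rw [← Finset.sum_filter]
  have hset : n.divisors.filter (fun d => d ∣ k) = (Nat.gcd n k).divisors := by
    ext d
    simp only [Finset.mem_filter, Nat.mem_divisors]
    constructor
    · rintro ⟨⟨h1, h2⟩, h3⟩
      exact ⟨Nat.dvd_gcd h1 h3, fun hg => (NeZero.ne n) (Nat.eq_zero_of_gcd_eq_zero_left hg)⟩
    · rintro ⟨h1, h2⟩
      exact ⟨⟨dvd_trans h1 (Nat.gcd_dvd_left _ _), NeZero.ne n⟩,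
        dvd_trans h1 (Nat.gcd_dvd_right _ _)⟩
  rw [hset]

lemma key (k : ℕ) (hkn : k ≤ n) (s : ℤ)
    (H : ∀ d ∈ (Nat.gcd n k).divisors,
      ((-1 : ℂ) ^ (d + 1)) ^ (k / d) * fsum n (-s) d
        = ((ArithmeticFunction.moebius d : ℤ) : ℂ)) :
    (T n k s : ℚ) = L n k := by
  have hm := master n k hkn s
  have hmain : (n : ℂ) * (T n k s : ℂ)
      = ((∑ d ∈ (Nat.gcd n k).divisors,
          (ArithmeticFunction.moebius d : ℤ) * ((n / d).choose (k / d) : ℤ) : ℤ) : ℂ) := by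
    rw [hm]
    push_cast
    refine Finset.sum_congr rfl fun d hd => ?_
    calc ((-1 : ℂ) ^ (d + 1)) ^ (k / d) * ((n / d).choose (k / d) : ℂ) * fsum n (-s) d
        = (((n / d).choose (k / d) : ℂ)) * (((-1 : ℂ) ^ (d + 1)) ^ (k / d) * fsum n (-s) d) := by
          ring
      _ = (((n / d).choose (k / d) : ℂ)) * ((ArithmeticFunction.moebius d : ℤ) : ℂ) := by
          rw [H d hd]
      _ = ((ArithmeticFunction.moebius d : ℤ) : ℂ) * ((n / d).choose (k / d) : ℂ) := by ring
  set Z : ℤ := ∑ d ∈ (Nat.gcd n k).divisors,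
    (ArithmeticFunction.moebius d : ℤ) * ((n / d).choose (k / d) : ℤ) with hZdef
  have hZ : ((n * T n k s : ℕ) : ℂ) = (Z : ℂ) := by rw [Nat.cast_mul, hmain]
  have hZ' : ((n * T n k s : ℕ) : ℤ) = Z := by exact_mod_cast hZ
  have hn0 : (n : ℚ) ≠ 0 := by
    simpa using (NeZero.ne n)
  rw [L]
  have hS : ((Z : ℚ)) = ∑ d ∈ (Nat.gcd n k).divisors,
      ((ArithmeticFunction.moebius d : ℤ) : ℚ) * ((n / d).choose (k / d) : ℚ) := by
    rw [hZdef]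
    push_cast
    rfl
  rw [← hS]
  have hq : (n : ℚ) * (T n k s : ℚ) = (Z : ℚ) := by exact_mod_cast hZ'
  field_simp
  linarith [hq]

end Stmt14Aux

open Stmt14Aux ArithmeticFunction

/-- If `k ≡ 2 (mod 4)` then `T(n,k,2) = L(n,k)`; if `k` is odd or `k ≡ 0 (mod 4)`
then `T(n,k,1) = L(n,k)`. -/
theorem stmt_14 (n k : ℕ) (hk : 0 < k) (hkn : k < n) :
    (k % 4 = 2 → (T n k 2 : ℚ) = L n k) ∧
    ((Odd k ∨ k % 4 = 0) → (T n k 1 : ℚ) = L n k) := by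
  haveI : NeZero n := ⟨by omega⟩
  constructor
  · -- k ≡ 2 mod 4, s = 2
    intro hk4
    refine key n k (le_of_lt hkn) 2 ?_
    intro d hd
    rw [Nat.mem_divisors] at hd
    have hdk : d ∣ k := dvd_trans hd.1 (Nat.gcd_dvd_right n k)
    have hdn : d ∣ n := dvd_trans hd.1 (Nat.gcd_dvd_left n k)
    have hd0 : 0 < d := Nat.pos_of_dvd_of_pos hdk hk
    rw [fsum_eq_mu2 n d hd0 hdn]
    by_cases h2 : 2 ∣ d
    · obtain ⟨m, hm⟩ := h2
      obtain ⟨c, hc⟩ := hdk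
      have hmodd : ¬ 2 ∣ m := by
        rintro ⟨r, hr⟩
        have h4 : 4 ∣ k := ⟨r * c, by rw [hc, hm, hr]; ring⟩
        omega
      have hcodd : ¬ 2 ∣ c := by
        rintro ⟨r, hr⟩
        have h4 : 4 ∣ k := ⟨m * r, by rw [hc, hm, hr]; ring⟩
        omega
      have hkd : k / d = c := by rw [hc, Nat.mul_div_cancel_left c hd0]
      have hdvd2 : 2 ∣ d := ⟨m, hm⟩
      have hd2 : d / 2 = m := by rw [hm, Nat.mul_div_cancel_left m (by norm_num)]
      have hμ : moebius d = - moebius m := by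
        rw [hm, (isMultiplicative_moebius).map_mul_of_coprime
          ((Nat.Prime.coprime_iff_not_dvd Nat.prime_two).mpr hmodd),
          moebius_apply_prime Nat.prime_two]
        ring
      have hsign : ((-1 : ℂ) ^ (d + 1)) = -1 := by
        refine Odd.neg_one_pow ?_
        refine Even.add_one ⟨m, ?_⟩
        rw [hm]; ring
      have hsign2 : ((-1 : ℂ) ^ (d + 1)) ^ (k / d) = -1 := by
        rw [hsign, hkd]
        exact Odd.neg_one_pow (Nat.odd_iff.mpr (by omega))
      rw [hsign2, if_pos hdvd2, hd2, hμ]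
      push_cast
      ring
    · have hsign : ((-1 : ℂ) ^ (d + 1)) = 1 := by
        refine Even.neg_one_pow ?_
        refine Odd.add_one (Nat.odd_iff.mpr (by omega))
      rw [hsign, one_pow, if_neg h2, one_mul]
      push_cast
      ring
  · -- s = 1
    intro hcase
    refine key n k (le_of_lt hkn) 1 ?_
    intro d hd
    rw [Nat.mem_divisors] at hd
    have hdk : d ∣ k := dvd_trans hd.1 (Nat.gcd_dvd_right n k)
    have hdn : d ∣ n := dvd_trans hd.1 (Nat.gcd_dvd_left n k)
    have hd0 : 0 < d := Nat.pos_of_dvd_of_pos hdk hk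
    rw [fsum_eq_mu n d hd0 hdn]
    by_cases h2 : 2 ∣ d
    · -- d even; then k is even, so k % 4 = 0 case
      have hk4 : k % 4 = 0 := by
        rcases hcase with hodd | h0
        · exfalso
          obtain ⟨c, hc⟩ := hdk
          obtain ⟨m, hm⟩ := h2
          rw [Nat.odd_iff] at hodd
          have : 2 ∣ k := ⟨m * c, by rw [hc, hm]; ring⟩
          omega
        · exact h0
      obtain ⟨m, hm⟩ := h2
      by_cases h4 : 2 ∣ m
      · -- 4 ∣ d : moebius d = 0
        have hnsq : ¬ Squarefree d := by
          intro hsq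
          have h22 : (2 * 2) ∣ d := by
            obtain ⟨r, hr⟩ := h4
            exact ⟨r, by rw [hm, hr]; ring⟩
          exact Nat.Prime.one_lt Nat.prime_two |>.ne' (Nat.isUnit_iff.mp (hsq 2 h22) )
        rw [moebius_eq_zero_of_not_squarefree hnsq]
        push_cast
        ring
      · -- d ≡ 2 mod 4 : k/d is even
        obtain ⟨c, hc⟩ := hdk
        have hk2 : k = 2 * (m * c) := by rw [hc, hm]; ring
        have hceven : 2 ∣ c := by
          have h2mc : 2 ∣ m * c := by
            obtain ⟨j, hj⟩ := (show 4 ∣ k by omega)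
            have h22 : 2 * (m * c) = 2 * (2 * j) := by rw [← hk2, hj]; ring
            exact ⟨j, Nat.eq_of_mul_eq_mul_left (by norm_num) h22⟩
          exact (Nat.Coprime.dvd_of_dvd_mul_left
            ((Nat.Prime.coprime_iff_not_dvd Nat.prime_two).mpr h4) h2mc)
        have hkd : k / d = c := by rw [hc, Nat.mul_div_cancel_left c hd0]
        have hsign2 : ((-1 : ℂ) ^ (d + 1)) ^ (k / d) = 1 := by
          rw [hkd, ← pow_mul]
          exact Even.neg_one_pow (Even.mul_left (Nat.even_iff.mpr (by omega)) _)
        rw [hsign2, one_mul]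
    · have hsign : ((-1 : ℂ) ^ (d + 1)) = 1 := by
        refine Even.neg_one_pow ?_
        refine Odd.add_one (Nat.odd_iff.mpr (by omega))
      rw [hsign, one_pow, one_mul]
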